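/- Let Θ = (A^Θ, C^Θ) be a two-layer bias-free ReLU network with input dimension d, m ≤ d hidden neurons, and output dimension D, where the rows a_1^Θ, …, a_m^Θ of A^Θ are linearly independent and every column c_i^Θ of C^Θ is nonzero. Let Φ = (A^Φ, C^Φ) be another such network with the same realization, i.e. C^Φ ReLU(A^Φ x) = C^Θ ReLU(A^Θ x) for all x ∈ ℝ^d. Then there exists a permutation π of {1,…,m} and positive scalars λ_1, …, λ_m such that a_i^Φ = λ_i a_{π(i)}^Θ and c_i^Φ = (1/λ_i) c_{π(i)}^Θ for all i. -/

import Mathlib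

open Finset

namespace Stmt3Aux

variable {d : ℕ}

noncomputable def dot {d : ℕ} (a x : Fin d → ℝ) : ℝ := ∑ l, a l * x l

lemma dot_add_smul (a x v : Fin d → ℝ) (t : ℝ) :
    dot a (x + t • v) = dot a x + t * dot a v := by
  simp only [dot, Pi.add_apply, Pi.smul_apply, smul_eq_mul, mul_add, Finset.sum_add_distrib,
    Finset.mul_sum]
  congr 1
  exact Finset.sum_congr rfl fun l _ => by ring

lemma dot_smul_left (μ : ℝ) (a x : Fin d → ℝ) : dot (μ • a) x = μ * dot a x := by
  simp only [dot, Pi.smul_apply, smul_eq_mul, Finset.mul_sum, mul_assoc]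

lemma dot_neg_right (a x : Fin d → ℝ) : dot a (-x) = -dot a x := by
  simp [dot, Finset.sum_neg_distrib]

lemma dot_single (a : Fin d → ℝ) (l : Fin d) : dot a (Pi.single l 1) = a l := by
  simp [dot, Pi.single_apply, Finset.sum_ite_eq']

lemma dot_self_nonneg (a : Fin d → ℝ) : 0 ≤ dot a a :=
  Finset.sum_nonneg fun l _ => mul_self_nonneg _

lemma eq_zero_of_dot_self {a : Fin d → ℝ} (h : dot a a = 0) : a = 0 := by
  funext l
  have h2 := (Finset.sum_eq_zero_iff_of_nonneg (fun l _ => mul_self_nonneg (a l))).mp h l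
    (Finset.mem_univ l)
  have := mul_self_eq_zero.mp h2
  simpa using this

lemma dot_self_pos {a : Fin d → ℝ} (ha : a ≠ 0) : 0 < dot a a :=
  lt_of_le_of_ne (dot_self_nonneg a) (fun h => ha (eq_zero_of_dot_self h.symm))

lemma dot_sum_left {ι : Type*} (s : Finset ι) (f : ι → Fin d → ℝ) (x : Fin d → ℝ) :
    dot (∑ k ∈ s, f k) x = ∑ k ∈ s, dot (f k) x := by
  simp only [dot]
  rw [Finset.sum_comm]
  exact Finset.sum_congr rfl fun l _ => by simp [Finset.sum_mul]

lemma exists_smul_of_ker_le (a g : Fin d → ℝ) (ha : a ≠ 0)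
    (h : ∀ x, dot a x = 0 → dot g x = 0) : ∃ μ : ℝ, g = μ • a := by
  have hq : 0 < dot a a := dot_self_pos ha
  refine ⟨dot g a / dot a a, funext fun l => ?_⟩
  have hx : dot a (Pi.single l 1 - (a l / dot a a) • a) = 0 := by
    have h1 : Pi.single l 1 - (a l / dot a a) • a = Pi.single l 1 + (-(a l / dot a a)) • a := by
      rw [sub_eq_add_neg, neg_smul]
    rw [h1]
    rw [dot_add_smul a (Pi.single l 1) a (-(a l / dot a a)), dot_single]
    field_simp
    ring
  have hg := h _ hx
  have h1 : Pi.single l 1 - (a l / dot a a) • a = Pi.single l 1 + (-(a l / dot a a)) • a := by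
    rw [sub_eq_add_neg, neg_smul]
  rw [h1, dot_add_smul g (Pi.single l 1) a (-(a l / dot a a)), dot_single] at hg
  have : g l = (a l / dot a a) * dot g a := by linarith
  simp only [Pi.smul_apply, smul_eq_mul]
  rw [this]; ring

lemma exists_generic {ι : Type*} [DecidableEq ι] (a : Fin d → ℝ) (ha : a ≠ 0)
    (g : ι → Fin d → ℝ) (S : Finset ι) (hS : ∀ i ∈ S, ¬ ∃ μ : ℝ, g i = μ • a) :
    ∃ x, dot a x = 0 ∧ ∀ i ∈ S, dot (g i) x ≠ 0 := by
  classical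
  induction S using Finset.induction_on with
  | empty =>
    exact ⟨0, by simp [dot], fun i hi => absurd hi (Finset.notMem_empty i)⟩
  | @insert i S hiS ih =>
    obtain ⟨x, hx0, hx⟩ := ih (fun i' hi' => hS i' (Finset.mem_insert_of_mem hi'))
    have hnp : ¬ ∃ μ : ℝ, g i = μ • a := hS i (Finset.mem_insert_self i S)
    have hu : ∃ u, dot a u = 0 ∧ dot (g i) u ≠ 0 := by
      by_contra hcon
      push_neg at hcon
      exact hnp (exists_smul_of_ker_le a (g i) ha hcon)
    obtain ⟨u, hau, hgu⟩ := hu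
    set T : Finset ℝ :=
      ((insert i S).filter (fun i' => dot (g i') u ≠ 0)).image
        (fun i' => -(dot (g i') x) / dot (g i') u) with hT
    obtain ⟨t, ht⟩ := Infinite.exists_notMem_finset T
    refine ⟨x + t • u, ?_, ?_⟩
    · rw [dot_add_smul, hx0, hau]; ring
    · intro i' hi'
      rw [dot_add_smul]
      by_cases hgu' : dot (g i') u = 0
      · rw [hgu', mul_zero, add_zero]
        rcases Finset.mem_insert.mp hi' with h | h
        · exact absurd (h ▸ hgu') hgu
        · exact hx i' h
      · intro hz
        apply ht
        rw [hT]
        refine Finset.mem_image.mpr ⟨i', Finset.mem_filter.mpr ⟨hi', hgu'⟩, ?_⟩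
        field_simp
        linarith

lemma abs_second_diff_ne (s p t : ℝ) (h : t * |p| ≤ |s|) (ht : 0 < t) :
    |s + t * p| + |s - t * p| = 2 * |s| := by
  have h1 : |t * p| ≤ |s| := by rwa [abs_mul, abs_of_pos ht]
  rcases le_total 0 s with hs | hs
  · rw [abs_of_nonneg hs] at h1 ⊢
    rw [abs_of_nonneg (by cases abs_le.mp h1; linarith),
      abs_of_nonneg (by cases abs_le.mp h1; linarith)]
    ring
  · rw [abs_of_nonpos hs] at h1 ⊢
    rw [abs_of_nonpos (by cases abs_le.mp h1; linarith),
      abs_of_nonpos (by cases abs_le.mp h1; linarith)]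
    ring

lemma exists_smallt {n : ℕ} (s p : Fin n → ℝ) :
    ∃ t : ℝ, 0 < t ∧ ∀ i, s i ≠ 0 → t * |p i| ≤ |s i| := by
  classical
  set F := (univ : Finset (Fin n)).filter (fun i => s i ≠ 0) with hF
  rcases Finset.eq_empty_or_nonempty F with he | hne
  · refine ⟨1, one_pos, fun i hi => absurd ?_ (Finset.notMem_empty i)⟩
    rw [← he] at *
    exact Finset.mem_filter.mpr ⟨Finset.mem_univ i, hi⟩
  · refine ⟨F.inf' hne (fun i => |s i| / (|p i| + 1)), ?_, ?_⟩
    · rw [Finset.lt_inf'_iff]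
      intro i hi
      have : s i ≠ 0 := (Finset.mem_filter.mp hi).2
      positivity
    · intro i hi
      have hiF : i ∈ F := Finset.mem_filter.mpr ⟨Finset.mem_univ i, hi⟩
      have h1 : F.inf' hne (fun i => |s i| / (|p i| + 1)) ≤ |s i| / (|p i| + 1) :=
        Finset.inf'_le _ hiF
      have hp : (0:ℝ) < |p i| + 1 := by positivity
      have h2 : F.inf' hne (fun i => |s i| / (|p i| + 1)) * (|p i| + 1) ≤ |s i| := by
        rw [← le_div_iff₀ hp]; exact h1
      have h0 : 0 < F.inf' hne (fun i => |s i| / (|p i| + 1)) := by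
        rw [Finset.lt_inf'_iff]
        intro i hi
        have : s i ≠ 0 := (Finset.mem_filter.mp hi).2
        positivity
      nlinarith [abs_nonneg (p i)]

lemma sum_secdiff {n : ℕ} (b : Fin n → Fin d → ℝ) (e : Fin n → ℝ) (x₀ v : Fin d → ℝ)
    (t : ℝ) (ht : 0 < t) (hts : ∀ i, dot (b i) x₀ ≠ 0 → t * |dot (b i) v| ≤ |dot (b i) x₀|) :
    (∑ i, e i * |dot (b i) (x₀ + t • v)|) + (∑ i, e i * |dot (b i) (x₀ + t • (-v))|)
      = 2 * (∑ i, e i * |dot (b i) x₀|)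
        + 2 * t * ∑ i ∈ univ.filter (fun i => dot (b i) x₀ = 0), e i * |dot (b i) v| := by
  classical
  have key : ∀ i : Fin n,
      e i * |dot (b i) (x₀ + t • v)| + e i * |dot (b i) (x₀ + t • (-v))|
        = 2 * (e i * |dot (b i) x₀|)
          + (if dot (b i) x₀ = 0 then 2 * t * (e i * |dot (b i) v|) else 0) := by
    intro i
    rw [dot_add_smul, dot_add_smul]
    have hneg : dot (b i) (-v) = -dot (b i) v := dot_neg_right _ _
    rw [hneg]
    by_cases hz : dot (b i) x₀ = 0
    · rw [if_pos hz, hz]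
      simp only [zero_add, abs_mul, abs_neg, mul_neg]
      rw [abs_of_pos ht, abs_zero]
      ring
    · rw [if_neg hz]
      have h1 := abs_second_diff_ne (dot (b i) x₀) (dot (b i) v) t (hts i hz) ht
      have h2 : dot (b i) x₀ + t * -dot (b i) v = dot (b i) x₀ - t * dot (b i) v := by ring
      rw [h2, ← mul_add, h1]
      ring
  rw [← Finset.sum_add_distrib, Finset.sum_congr rfl (fun i _ => key i),
    Finset.sum_add_distrib, ← Finset.mul_sum]
  congr 1
  rw [← Finset.sum_filter, Finset.mul_sum]

lemma secdiff_eq {n₁ n₂ : ℕ} (b₁ : Fin n₁ → Fin d → ℝ) (e₁ : Fin n₁ → ℝ)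
    (b₂ : Fin n₂ → Fin d → ℝ) (e₂ : Fin n₂ → ℝ)
    (h : ∀ x, ∑ i, e₁ i * |dot (b₁ i) x| = ∑ i, e₂ i * |dot (b₂ i) x|)
    (x₀ v : Fin d → ℝ) :
    ∑ i ∈ univ.filter (fun i => dot (b₁ i) x₀ = 0), e₁ i * |dot (b₁ i) v|
      = ∑ i ∈ univ.filter (fun i => dot (b₂ i) x₀ = 0), e₂ i * |dot (b₂ i) v| := by
  classical
  obtain ⟨t₁, ht₁, hts₁⟩ := exists_smallt (fun i => dot (b₁ i) x₀) (fun i => dot (b₁ i) v)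
  obtain ⟨t₂, ht₂, hts₂⟩ := exists_smallt (fun i => dot (b₂ i) x₀) (fun i => dot (b₂ i) v)
  set t := min t₁ t₂ with hts
  have ht : 0 < t := lt_min ht₁ ht₂
  have hb₁ : ∀ i, dot (b₁ i) x₀ ≠ 0 → t * |dot (b₁ i) v| ≤ |dot (b₁ i) x₀| := fun i hi =>
    le_trans (mul_le_mul_of_nonneg_right (min_le_left _ _) (abs_nonneg _)) (hts₁ i hi)
  have hb₂ : ∀ i, dot (b₂ i) x₀ ≠ 0 → t * |dot (b₂ i) v| ≤ |dot (b₂ i) x₀| := fun i hi =>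
    le_trans (mul_le_mul_of_nonneg_right (min_le_right _ _) (abs_nonneg _)) (hts₂ i hi)
  have H1 := sum_secdiff b₁ e₁ x₀ v t ht hb₁
  have H2 := sum_secdiff b₂ e₂ x₀ v t ht hb₂
  rw [h (x₀ + t • v), h (x₀ + t • (-v)), h x₀, H2] at H1
  have h2t : (0:ℝ) < 2 * t := by linarith
  exact (mul_left_cancel₀ (ne_of_gt h2t) (by linarith)).symm

lemma li_eq_of_smul {m d : ℕ} {f : Fin m → Fin d → ℝ} (h : LinearIndependent ℝ f)
    {i k : Fin m} {μ : ℝ} (hik : f i = μ • f k) : i = k := by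
  classical
  by_contra hne
  have hsum : ∑ l, ((Pi.single i (1:ℝ) - Pi.single k μ) : Fin m → ℝ) l • f l = 0 := by
    simp only [Pi.sub_apply, sub_smul, Finset.sum_sub_distrib, Pi.single_apply, ite_smul,
      zero_smul, Finset.sum_ite_eq', Finset.mem_univ, if_true, one_smul]
    rw [hik]; simp
  have := Fintype.linearIndependent_iff.mp h _ hsum i
  simp [Pi.single_apply, hne] at this

lemma max_sub_max_neg (s : ℝ) : max s 0 - max (-s) 0 = s := by
  rcases le_total 0 s with h | h
  · rw [max_eq_left h, max_eq_right (by linarith)]; ring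
  · rw [max_eq_right h, max_eq_left (by linarith)]; ring

end Stmt3Aux

open Finset Stmt3Aux
/-- Uniqueness of parametrization (up to permutation and positive rescaling)
for shallow bias-free ReLU networks with linearly independent weight vectors
and nonzero output columns. -/
theorem stmt_3 {d m D : ℕ}
    (aΘ : Fin m → Fin d → ℝ) (cΘ : Fin m → Fin D → ℝ)
    (aΦ : Fin m → Fin d → ℝ) (cΦ : Fin m → Fin D → ℝ)
    (hind : LinearIndependent ℝ aΘ)
    (hc : ∀ i, cΘ i ≠ 0)
    (hreal : ∀ x : Fin d → ℝ, ∀ j : Fin D,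
      ∑ i, cΦ i j * max (∑ l, aΦ i l * x l) 0 =
        ∑ i, cΘ i j * max (∑ l, aΘ i l * x l) 0) :
    ∃ π : Equiv.Perm (Fin m), ∃ lam : Fin m → ℝ, (∀ i, 0 < lam i) ∧
      (∀ i, aΦ i = lam i • aΘ (π i)) ∧ (∀ i, cΦ i = (lam i)⁻¹ • cΘ (π i)) := by
  classical
  have hreal' : ∀ (x : Fin d → ℝ) (j : Fin D),
      ∑ i, cΦ i j * max (dot (aΦ i) x) 0 = ∑ i, cΘ i j * max (dot (aΘ i) x) 0 := hreal
  -- absolute-value combination identity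
  have habs : ∀ (j : Fin D) (x : Fin d → ℝ),
      ∑ i, cΦ i j * |dot (aΦ i) x| = ∑ i, cΘ i j * |dot (aΘ i) x| := by
    intro j x
    have split : ∀ (n : ℕ) (a : Fin n → Fin d → ℝ) (e : Fin n → ℝ),
        ∑ i, e i * |dot (a i) x|
          = (∑ i, e i * max (dot (a i) x) 0) + ∑ i, e i * max (dot (a i) (-x)) 0 := by
      intro n a e
      rw [← Finset.sum_add_distrib]
      refine Finset.sum_congr rfl fun i _ => ?_
      rw [dot_neg_right, ← mul_add, max_zero_add_max_neg_zero_eq_abs_self]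
    rw [split m aΦ (fun i => cΦ i j), split m aΘ (fun i => cΘ i j),
      hreal' x j, hreal' (-x) j]
  -- linear combination identity
  have hlin : ∀ (j : Fin D) (x : Fin d → ℝ),
      ∑ i, cΦ i j * dot (aΦ i) x = ∑ i, cΘ i j * dot (aΘ i) x := by
    intro j x
    have split : ∀ (n : ℕ) (a : Fin n → Fin d → ℝ) (e : Fin n → ℝ),
        ∑ i, e i * dot (a i) x
          = (∑ i, e i * max (dot (a i) x) 0) - ∑ i, e i * max (dot (a i) (-x)) 0 := by
      intro n a e
      rw [← Finset.sum_sub_distrib]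
      refine Finset.sum_congr rfl fun i _ => ?_
      rw [dot_neg_right, ← mul_sub, max_sub_max_neg]
    rw [split m aΦ (fun i => cΦ i j), split m aΘ (fun i => cΘ i j),
      hreal' x j, hreal' (-x) j]
  -- localized identity
  have hsec : ∀ (j : Fin D) (x₀ v : Fin d → ℝ),
      ∑ i ∈ univ.filter (fun i => dot (aΦ i) x₀ = 0), cΦ i j * |dot (aΦ i) v|
        = ∑ i ∈ univ.filter (fun i => dot (aΘ i) x₀ = 0), cΘ i j * |dot (aΘ i) v| :=
    fun j x₀ v => secdiff_eq aΦ (fun i => cΦ i j) aΘ (fun i => cΘ i j) (habs j) x₀ v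
  have haΘ : ∀ k, aΘ k ≠ 0 := fun k => hind.ne_zero k
  -- class identity for each k
  have star : ∀ (k : Fin m) (j : Fin D) (v : Fin d → ℝ),
      ∑ i ∈ univ.filter (fun i => ∃ μ : ℝ, aΦ i = μ • aΘ k), cΦ i j * |dot (aΦ i) v|
        = cΘ k j * |dot (aΘ k) v| := by
    intro k j v
    obtain ⟨x₀, hx0, hxg'⟩ := exists_generic (aΘ k) (haΘ k) (Sum.elim aΦ aΘ)
      (univ.filter (fun i => ¬ ∃ μ : ℝ, Sum.elim aΦ aΘ i = μ • aΘ k))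
      (fun i hi => (Finset.mem_filter.mp hi).2)
    have hxg : ∀ i : Fin m ⊕ Fin m, (¬ ∃ μ : ℝ, Sum.elim aΦ aΘ i = μ • aΘ k) →
        dot (Sum.elim aΦ aΘ i) x₀ ≠ 0 := fun i hi =>
      hxg' i (Finset.mem_filter.mpr ⟨Finset.mem_univ i, hi⟩)
    have hZΘ : univ.filter (fun i => dot (aΘ i) x₀ = 0) = {k} := by
      ext i
      simp only [Finset.mem_filter, Finset.mem_univ, true_and, Finset.mem_singleton]
      constructor
      · intro hzi
        by_contra hne
        by_cases hpar : ∃ μ : ℝ, aΘ i = μ • aΘ k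
        · obtain ⟨μ, hμ⟩ := hpar
          exact hne (li_eq_of_smul hind hμ)
        · exact hxg (Sum.inr i) hpar hzi
      · rintro rfl; exact hx0
    have hZΦ : univ.filter (fun i => dot (aΦ i) x₀ = 0)
        = univ.filter (fun i => ∃ μ : ℝ, aΦ i = μ • aΘ k) := by
      ext i
      simp only [Finset.mem_filter, Finset.mem_univ, true_and]
      constructor
      · intro hzi
        by_contra hpar
        exact hxg (Sum.inl i) hpar hzi
      · rintro ⟨μ, hμ⟩
        rw [hμ, dot_smul_left, hx0, mul_zero]
    have := hsec j x₀ v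
    rw [hZΘ, hZΦ] at this
    rw [this, Finset.sum_singleton]
  -- choose a representative for each class
  have hexist : ∀ k : Fin m, ∃ i : Fin m, ∃ μ : ℝ, μ ≠ 0 ∧ aΦ i = μ • aΘ k := by
    intro k
    obtain ⟨j, hj⟩ := Function.ne_iff.mp (hc k)
    have hq : 0 < dot (aΘ k) (aΘ k) := dot_self_pos (haΘ k)
    have hRHS : cΘ k j * |dot (aΘ k) (aΘ k)| ≠ 0 := by
      apply mul_ne_zero hj
      rw [abs_of_pos hq]; exact ne_of_gt hq
    have hsum : ∑ i ∈ univ.filter (fun i => ∃ μ : ℝ, aΦ i = μ • aΘ k),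
        cΦ i j * |dot (aΦ i) (aΘ k)| ≠ 0 := by
      rw [star k j (aΘ k)]; exact hRHS
    obtain ⟨i, hi, hne⟩ := Finset.exists_ne_zero_of_sum_ne_zero hsum
    obtain ⟨μ, hμ⟩ := (Finset.mem_filter.mp hi).2
    refine ⟨i, μ, ?_, hμ⟩
    intro hμ0
    apply hne
    rw [hμ, hμ0, zero_smul]
    simp [dot]
  choose σ μ hμ0 hμeq using hexist
  -- σ is a bijection
  have hσinj : Function.Injective σ := by
    intro k l hkl
    have h1 : μ k • aΘ k = μ l • aΘ l := by rw [← hμeq k, ← hμeq l, hkl]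
    have h2 : aΘ k = ((μ k)⁻¹ * μ l) • aΘ l := by
      rw [mul_smul, ← h1, ← mul_smul, inv_mul_cancel₀ (hμ0 k), one_smul]
    exact li_eq_of_smul hind h2
  have hσbij : Function.Bijective σ := Finite.injective_iff_bijective.mp hσinj
  let e : Equiv.Perm (Fin m) := Equiv.ofBijective σ hσbij
  have he : ∀ k, (e k : Fin m) = σ k := fun k => rfl
  -- each class is exactly the singleton {σ k}
  have hPk : ∀ k, univ.filter (fun i => ∃ μ' : ℝ, aΦ i = μ' • aΘ k) = {σ k} := by
    intro k
    ext i
    simp only [Finset.mem_filter, Finset.mem_univ, true_and, Finset.mem_singleton]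
    constructor
    · rintro ⟨ν, hν⟩
      have hiσ : σ (e.symm i) = i := e.apply_symm_apply i
      have h1 : μ (e.symm i) • aΘ (e.symm i) = ν • aΘ k := by
        rw [← hμeq (e.symm i), hiσ, hν]
      have hν0 : ν ≠ 0 := by
        intro h0
        rw [h0, zero_smul] at h1
        exact haΘ (e.symm i) (by
          have := smul_eq_zero.mp h1
          rcases this with h | h
          · exact absurd h (hμ0 _)
          · exact h)
      have h2 : aΘ (e.symm i) = ((μ (e.symm i))⁻¹ * ν) • aΘ k := by
        rw [mul_smul, ← h1, ← mul_smul, inv_mul_cancel₀ (hμ0 _), one_smul]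
      have := li_eq_of_smul hind h2
      rw [← hiσ, this]
    · rintro rfl
      exact ⟨μ k, hμeq k⟩
  -- (†)
  have dagger : ∀ (k : Fin m) (j : Fin D), cΦ (σ k) j * |μ k| = cΘ k j := by
    intro k j
    have h1 := star k j (aΘ k)
    rw [hPk k, Finset.sum_singleton, hμeq k, dot_smul_left, abs_mul] at h1
    have hq : 0 < dot (aΘ k) (aΘ k) := dot_self_pos (haΘ k)
    rw [abs_of_pos hq] at h1
    rw [← mul_assoc] at h1
    exact mul_right_cancel₀ (ne_of_gt hq) h1
  -- (‡)
  have ddagger : ∀ (j : Fin D) (k : Fin m), cΦ (σ k) j * μ k = cΘ k j := by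
    intro j k
    have hw : ∀ x, dot (∑ l, (cΦ (σ l) j * μ l - cΘ l j) • aΘ l) x = 0 := by
      intro x
      rw [dot_sum_left]
      have hre : ∑ i, cΦ i j * dot (aΦ i) x = ∑ l, cΦ (σ l) j * (μ l * dot (aΘ l) x) := by
        rw [← Equiv.sum_comp e (fun i => cΦ i j * dot (aΦ i) x)]
        refine Finset.sum_congr rfl fun l _ => ?_
        rw [he l, hμeq l, dot_smul_left]
      have hsub : ∑ l, dot ((cΦ (σ l) j * μ l - cΘ l j) • aΘ l) x
          = (∑ l, cΦ (σ l) j * (μ l * dot (aΘ l) x)) - ∑ l, cΘ l j * dot (aΘ l) x := by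
        rw [← Finset.sum_sub_distrib]
        refine Finset.sum_congr rfl fun l _ => ?_
        rw [dot_smul_left]; ring
      rw [hsub, ← hre, hlin j x, sub_self]
    have hw0 : ∑ l, (cΦ (σ l) j * μ l - cΘ l j) • aΘ l = 0 :=
      eq_zero_of_dot_self (hw _)
    have := Fintype.linearIndependent_iff.mp hind _ hw0 k
    linarith [this]
  -- positivity of μ
  have hμpos : ∀ k, 0 < μ k := by
    intro k
    obtain ⟨j, hj⟩ := Function.ne_iff.mp (hc k)
    have d1 := dagger k j
    have d2 := ddagger j k
    have hcj : cΦ (σ k) j ≠ 0 := by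
      intro h0
      rw [h0, zero_mul] at d2
      exact hj d2.symm
    have habs : |μ k| = μ k := mul_left_cancel₀ hcj (d1.trans d2.symm)
    have := abs_pos.mpr (hμ0 k)
    linarith [habs ▸ this]
  -- assemble
  refine ⟨e.symm, fun i => μ (e.symm i), fun i => hμpos _, fun i => ?_, fun i => ?_⟩
  · have hiσ : σ (e.symm i) = i := e.apply_symm_apply i
    conv_lhs => rw [← hiσ]
    exact hμeq (e.symm i)
  · funext j
    have hiσ : σ (e.symm i) = i := e.apply_symm_apply i
    have h1 := ddagger j (e.symm i)
    rw [hiσ] at h1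
    have hne := ne_of_gt (hμpos (e.symm i))
    simp only [Pi.smul_apply, smul_eq_mul]
    rw [← h1]
    field_simp
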